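/- Define J̃ : T → T on the space T = {(u,v) ∈ S^6 × ℝ^7 : ⟨u,v⟩=0} of oriented lines by acting on tangent vectors (u̇, v̇) ∈ T_{(u,v)}T via componentwise cross product with u: J̃(u̇, v̇) = (u × u̇, u × v̇). Then J̃² = −Id, so J̃ is an almost complex structure on T. -/

import Mathlib

open scoped RealInnerProductSpace

/-- Structure constants of the standard `G₂` 3-form
`φ = dx₁₂₃ + dx₁∧(dx₄₅+dx₆₇) + dx₂∧(dx₄₆−dx₅₇) − dx₃∧(dx₄₇+dx₅₆)` on `ℝ⁷`
(indices shifted to `0,…,6`), totally antisymmetrised. -/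
def g2phi (i j k : Fin 7) : ℝ :=
  let f : Fin 7 × Fin 7 × Fin 7 → ℝ := fun t =>
    if t ∈ ([(0, 1, 2), (0, 3, 4), (0, 5, 6), (1, 3, 5)] : List (Fin 7 × Fin 7 × Fin 7))
      then 1
    else if t ∈ ([(1, 4, 6), (2, 3, 6), (2, 4, 5)] : List (Fin 7 × Fin 7 × Fin 7))
      then -1
    else 0
  f (i, j, k) + f (j, k, i) + f (k, i, j) - f (i, k, j) - f (j, i, k) - f (k, j, i)

/-- The seven-dimensional cross product on `ℝ⁷`, defined by `⟨X × Y, Z⟩ = φ(X,Y,Z)`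
for the standard `G₂` 3-form `φ` (equivalently, the cross product induced by octonion
multiplication on the imaginary octonions). -/
noncomputable def cross7 (X Y : EuclideanSpace ℝ (Fin 7)) : EuclideanSpace ℝ (Fin 7) :=
  WithLp.toLp 2 fun k => ∑ i, ∑ j, g2phi i j k * X i * Y j

set_option maxHeartbeats 1000000 in
lemma cross7_apply0 (X Y : EuclideanSpace ℝ (Fin 7)) : cross7 X Y 0 =
    X 1 * Y 2 - X 2 * Y 1 + X 3 * Y 4 - X 4 * Y 3 + X 5 * Y 6 - X 6 * Y 5 := by
  simp (config := { decide := true }) [cross7, g2phi, Fin.sum_univ_seven]; ring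

set_option maxHeartbeats 1000000 in
lemma cross7_apply1 (X Y : EuclideanSpace ℝ (Fin 7)) : cross7 X Y 1 =
    -(X 0 * Y 2) + X 2 * Y 0 + X 3 * Y 5 - X 4 * Y 6 - X 5 * Y 3 + X 6 * Y 4 := by
  simp (config := { decide := true }) [cross7, g2phi, Fin.sum_univ_seven]; ring

set_option maxHeartbeats 1000000 in
lemma cross7_apply2 (X Y : EuclideanSpace ℝ (Fin 7)) : cross7 X Y 2 =
    X 0 * Y 1 - X 1 * Y 0 - X 3 * Y 6 - X 4 * Y 5 + X 5 * Y 4 + X 6 * Y 3 := by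
  simp (config := { decide := true }) [cross7, g2phi, Fin.sum_univ_seven]; ring

set_option maxHeartbeats 1000000 in
lemma cross7_apply3 (X Y : EuclideanSpace ℝ (Fin 7)) : cross7 X Y 3 =
    -(X 0 * Y 4) - X 1 * Y 5 + X 2 * Y 6 + X 4 * Y 0 + X 5 * Y 1 - X 6 * Y 2 := by
  simp (config := { decide := true }) [cross7, g2phi, Fin.sum_univ_seven]; ring

set_option maxHeartbeats 1000000 in
lemma cross7_apply4 (X Y : EuclideanSpace ℝ (Fin 7)) : cross7 X Y 4 =
    X 0 * Y 3 + X 1 * Y 6 + X 2 * Y 5 - X 3 * Y 0 - X 5 * Y 2 - X 6 * Y 1 := by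
  simp (config := { decide := true }) [cross7, g2phi, Fin.sum_univ_seven]; ring

set_option maxHeartbeats 1000000 in
lemma cross7_apply5 (X Y : EuclideanSpace ℝ (Fin 7)) : cross7 X Y 5 =
    -(X 0 * Y 6) + X 1 * Y 3 - X 2 * Y 4 - X 3 * Y 1 + X 4 * Y 2 + X 6 * Y 0 := by
  simp (config := { decide := true }) [cross7, g2phi, Fin.sum_univ_seven]; ring

set_option maxHeartbeats 1000000 in
lemma cross7_apply6 (X Y : EuclideanSpace ℝ (Fin 7)) : cross7 X Y 6 =
    X 0 * Y 5 - X 1 * Y 4 - X 2 * Y 3 + X 3 * Y 2 + X 4 * Y 1 - X 5 * Y 0 := by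
  simp (config := { decide := true }) [cross7, g2phi, Fin.sum_univ_seven]; ring

/-- The fundamental identity `u × (u × x) = ⟨u,x⟩ u − ⟨u,u⟩ x` in coordinate form. -/
lemma cross7_cross7 (u x : EuclideanSpace ℝ (Fin 7))
    (h1 : u 0 * u 0 + u 1 * u 1 + u 2 * u 2 + u 3 * u 3 + u 4 * u 4 + u 5 * u 5 + u 6 * u 6 = 1)
    (h2 : u 0 * x 0 + u 1 * x 1 + u 2 * x 2 + u 3 * x 3 + u 4 * x 4 + u 5 * x 5 + u 6 * x 6 = 0) :
    cross7 u (cross7 u x) = -x := by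
  ext k
  fin_cases k
  · show cross7 u (cross7 u x) 0 = -(x 0)
    simp only [cross7_apply0, cross7_apply1, cross7_apply2, cross7_apply3, cross7_apply4,
      cross7_apply5, cross7_apply6]
    linear_combination u 0 * h2 - x 0 * h1
  · show cross7 u (cross7 u x) 1 = -(x 1)
    simp only [cross7_apply0, cross7_apply1, cross7_apply2, cross7_apply3, cross7_apply4,
      cross7_apply5, cross7_apply6]
    linear_combination u 1 * h2 - x 1 * h1
  · show cross7 u (cross7 u x) 2 = -(x 2)
    simp only [cross7_apply0, cross7_apply1, cross7_apply2, cross7_apply3, cross7_apply4,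
      cross7_apply5, cross7_apply6]
    linear_combination u 2 * h2 - x 2 * h1
  · show cross7 u (cross7 u x) 3 = -(x 3)
    simp only [cross7_apply0, cross7_apply1, cross7_apply2, cross7_apply3, cross7_apply4,
      cross7_apply5, cross7_apply6]
    linear_combination u 3 * h2 - x 3 * h1
  · show cross7 u (cross7 u x) 4 = -(x 4)
    simp only [cross7_apply0, cross7_apply1, cross7_apply2, cross7_apply3, cross7_apply4,
      cross7_apply5, cross7_apply6]
    linear_combination u 4 * h2 - x 4 * h1
  · show cross7 u (cross7 u x) 5 = -(x 5)
    simp only [cross7_apply0, cross7_apply1, cross7_apply2, cross7_apply3, cross7_apply4,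
      cross7_apply5, cross7_apply6]
    linear_combination u 5 * h2 - x 5 * h1
  · show cross7 u (cross7 u x) 6 = -(x 6)
    simp only [cross7_apply0, cross7_apply1, cross7_apply2, cross7_apply3, cross7_apply4,
      cross7_apply5, cross7_apply6]
    linear_combination u 6 * h2 - x 6 * h1

/-- On the twistor space `T = {(u,v) ∈ S⁶ × ℝ⁷ : ⟨u,v⟩ = 0}`, the map acting on tangent
vectors `(a, b)` (with `a ⟂ u`, `b ⟂ u`, the normal Jacobi field description) by componentwise
cross product with `u` squares to `−Id`, hence is an almost complex structure on `T`. -/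
theorem stmt15 (u v a b : EuclideanSpace ℝ (Fin 7)) (hu : ‖u‖ = 1) (huv : ⟪u, v⟫ = 0)
    (ha : ⟪u, a⟫ = 0) (hb : ⟪u, b⟫ = 0) :
    (cross7 u (cross7 u a), cross7 u (cross7 u b)) = (-a, -b) := by
  have h1 : u 0 * u 0 + u 1 * u 1 + u 2 * u 2 + u 3 * u 3 + u 4 * u 4 + u 5 * u 5 + u 6 * u 6
      = 1 := by
    have : ⟪u, u⟫ = 1 := by
      rw [real_inner_self_eq_norm_sq, hu]; norm_num
    rw [PiLp.inner_apply] at this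
    simpa [RCLike.inner_apply, Fin.sum_univ_seven, mul_comm, sq] using this
  have key : ∀ x : EuclideanSpace ℝ (Fin 7), ⟪u, x⟫ = 0 → cross7 u (cross7 u x) = -x := by
    intro x hx
    refine cross7_cross7 u x h1 ?_
    simpa [PiLp.inner_apply, RCLike.inner_apply, Fin.sum_univ_seven, mul_comm] using hx
  rw [key a ha, key b hb]
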